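/- Let S ⊆ ℝ be a set of reals that is not Lebesgue-null (its outer Lebesgue measure is nonzero), and let r be a binary relation on ℝ whose restriction to S is a strict well-ordering of S (irreflexive, transitive, trichotomous on S, and well-founded on S). Then the set W = {(x, y) ∈ ℝ × ℝ | x ∈ S, y ∈ S, and r x y} is not Lebesgue measurable, i.e., W is not null-measurable with respect to the product Lebesgue measure (volume) on ℝ × ℝ. -/

import Mathlib

open MeasureTheory ENNReal

/-- Any well-ordering of a non-null set of reals is not Lebesgue measurable:
if `S ⊆ ℝ` is not Lebesgue-null and `r` restricted to `S` is a strict well-ordering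
of `S`, then `{(x, y) | x ∈ S ∧ y ∈ S ∧ r x y}` is not null-measurable for the
product Lebesgue measure on `ℝ × ℝ`. -/
theorem wellOrder_of_nonNull_not_measurable
    (S : Set ℝ) (hS : volume S ≠ 0)
    (r : ℝ → ℝ → Prop)
    (hirr : ∀ x ∈ S, ¬ r x x)
    (htrans : ∀ x ∈ S, ∀ y ∈ S, ∀ z ∈ S, r x y → r y z → r x z)
    (htri : ∀ x ∈ S, ∀ y ∈ S, r x y ∨ x = y ∨ r y x)
    (hwf : S.WellFoundedOn r) :
    ¬ NullMeasurableSet {p : ℝ × ℝ | p.1 ∈ S ∧ p.2 ∈ S ∧ r p.1 p.2}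
      (volume : Measure (ℝ × ℝ)) := by
  classical
  intro hNM
  set W : Set (ℝ × ℝ) := {p : ℝ × ℝ | p.1 ∈ S ∧ p.2 ∈ S ∧ r p.1 p.2} with hWdef
  -- Step 1: find a non-null `T₀ ⊆ S` all of whose "initial segments" are null.
  obtain ⟨T0, hT0S, hT0pos, hT0sec⟩ :
      ∃ T : Set ℝ, T ⊆ S ∧ volume T ≠ 0 ∧ ∀ y ∈ T, volume {x | x ∈ S ∧ r x y} = 0 := by
    by_cases h : ∃ y, y ∈ S ∧ volume {x | x ∈ S ∧ r x y} ≠ 0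
    · obtain ⟨m, ⟨hmS, hmpos⟩, hmin⟩ :=
        (Set.wellFoundedOn_iff.mp hwf).has_min
          {y | y ∈ S ∧ volume {x | x ∈ S ∧ r x y} ≠ 0} h
      refine ⟨{x | x ∈ S ∧ r x m}, fun x hx => hx.1, hmpos, ?_⟩
      intro y hy
      by_contra hc
      exact hmin y ⟨hy.1, hc⟩ ⟨hy.2, hy.1, hmS⟩
    · push_neg at h
      exact ⟨S, subset_rfl, hS, h⟩
  -- Step 2: pass to a bounded, hence finite-outer-measure, non-null piece `T`.
  obtain ⟨n, hn⟩ : ∃ n : ℕ, volume (T0 ∩ Set.Icc (-(n : ℝ)) n) ≠ 0 := by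
    by_contra hc
    push_neg at hc
    apply hT0pos
    have hsub : T0 ⊆ ⋃ n : ℕ, T0 ∩ Set.Icc (-(n : ℝ)) n := by
      intro x hx
      obtain ⟨n, hn⟩ := exists_nat_ge |x|
      exact Set.mem_iUnion.mpr ⟨n, hx, neg_le_of_abs_le hn, le_of_abs_le hn⟩
    exact measure_mono_null hsub (measure_iUnion_null hc)
  set T : Set ℝ := T0 ∩ Set.Icc (-(n : ℝ)) n with hTdef
  have hTS : T ⊆ S := fun x hx => hT0S hx.1
  have hTsec : ∀ y ∈ T, volume {x | x ∈ S ∧ r x y} = 0 := fun y hy => hT0sec y hy.1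
  have hTfin : volume T ≠ ∞ :=
    ne_top_of_le_ne_top (by simp [Real.volume_Icc]) (measure_mono Set.inter_subset_right)
  set c : ℝ≥0∞ := volume T with hcdef
  -- Step 3: measurable hull of `T`.
  set H : Set ℝ := toMeasurable volume T with hHdef
  have hHm : MeasurableSet H := measurableSet_toMeasurable _ _
  have hTH : T ⊆ H := subset_toMeasurable _ _
  have hHc : volume H = c := measure_toMeasurable T
  have hull : ∀ {A : Set ℝ}, MeasurableSet A → volume (H ∩ A) = volume (T ∩ A) :=
    fun hA => Measure.measure_toMeasurable_inter hA hTfin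
  -- Step 4: a measurable version `B` of `W`, and a measurable null set `M ⊇ B \ W`.
  obtain ⟨B, hWB, hBm, hBW⟩ := hNM.exists_measurable_superset_ae_eq
  have hN : (volume : Measure (ℝ × ℝ)) (B \ W) = 0 := ae_le_set.mp hBW.le
  obtain ⟨M, hNsubM, hMm, hM0⟩ := exists_measurable_superset_of_null hN
  have hBWM : B ⊆ W ∪ M := fun p hp => by
    by_cases hpw : p ∈ W
    · exact Or.inl hpw
    · exact Or.inr (hNsubM ⟨hp, hpw⟩)
  -- a.e. sections of `M` (in both directions) are null
  have hae1 : ∀ᵐ x, volume (Prod.mk x ⁻¹' M) = 0 :=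
    Measure.measure_ae_null_of_prod_null (μ := volume) (ν := volume) hM0
  have hM'm : MeasurableSet (Prod.swap ⁻¹' M : Set (ℝ × ℝ)) := measurable_swap hMm
  have hM'0 : (volume : Measure (ℝ × ℝ)) (Prod.swap ⁻¹' M) = 0 := by
    rw [Measure.volume_eq_prod,
      (Measure.measurePreserving_swap (μ := (volume : Measure ℝ))
        (ν := (volume : Measure ℝ))).measure_preimage hMm.nullMeasurableSet]
    exact hM0
  have hae2 : ∀ᵐ y, volume {x | (x, y) ∈ M} = 0 :=
    Measure.measure_ae_null_of_prod_null (μ := volume) (ν := volume) hM'0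
  -- Step 5: restrict to the hull
  set B' : Set (ℝ × ℝ) := B ∩ H ×ˢ H with hB'def
  have hB'm : MeasurableSet B' := hBm.inter (hHm.prod hHm)
  -- Upper bound: `B'` is null, integrating over the second coordinate.
  have upper : (volume : Measure (ℝ × ℝ)) B' = 0 := by
    set g : ℝ → ℝ≥0∞ := fun y => volume ((fun x => (x, y)) ⁻¹' B') with hgdef
    have hgm : Measurable g := measurable_measure_prodMk_right hB'm
    set A : Set ℝ := {y | g y ≠ 0} with hAdef
    have hAm : MeasurableSet A := (hgm (measurableSet_singleton 0)).compl
    -- `T ∩ A` is contained in the null set of "bad" `y`'s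
    have hTA : volume (T ∩ A) = 0 := by
      refine measure_mono_null ?_ (ae_iff.mp hae2)
      rintro y ⟨hyT, hyA⟩
      intro hy0
      apply hyA
      have hsub : (fun x => (x, y)) ⁻¹' B' ⊆ {x | x ∈ S ∧ r x y} ∪ {x | (x, y) ∈ M} := by
        intro x hx
        rcases hBWM hx.1 with hw | hm
        · exact Or.inl ⟨hw.1, hw.2.2⟩
        · exact Or.inr hm
      exact measure_mono_null hsub
        (measure_union_null (hTsec y hyT) hy0)
    have hHA : volume (H ∩ A) = 0 := (hull hAm).trans hTA
    have hg0 : ∀ᵐ y, g y = 0 := by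
      rw [ae_iff]
      refine measure_mono_null ?_ hHA
      intro y hy
      refine ⟨?_, hy⟩
      by_contra hyH
      apply hy
      have : (fun x => (x, y)) ⁻¹' B' = ∅ := by
        ext x
        simp only [Set.mem_preimage, Set.mem_empty_iff_false, iff_false]
        intro hx
        exact hyH hx.2.2
      simp [hgdef, this]
    rw [Measure.volume_eq_prod, Measure.prod_apply_symm hB'm]
    calc ∫⁻ y, volume ((fun x => (x, y)) ⁻¹' B') = ∫⁻ _, (0 : ℝ≥0∞) :=
          lintegral_congr_ae hg0
      _ = 0 := lintegral_zero
  -- Lower bound: `volume B' ≥ c * c`.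
  have lower : c * c ≤ (volume : Measure (ℝ × ℝ)) B' := by
    set f : ℝ → ℝ≥0∞ := fun x => volume (Prod.mk x ⁻¹' B') with hfdef
    have hfm : Measurable f := measurable_measure_prodMk_left hB'm
    set A' : Set ℝ := {x | c ≤ f x} with hA'def
    have hA'm : MeasurableSet A' := hfm measurableSet_Ici
    -- good points of `T` are in `A'`
    have hTgood : T \ {x | volume (Prod.mk x ⁻¹' M) ≠ 0} ⊆ A' := by
      rintro x ⟨hxT, hxgood⟩
      have hxM : volume (Prod.mk x ⁻¹' M) = 0 := not_not.mp hxgood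
      have hxS : x ∈ S := hTS hxT
      have hcover : T ⊆ (Prod.mk x ⁻¹' B') ∪ ((Prod.mk x ⁻¹' M) ∪
          ({z | z ∈ S ∧ r z x} ∪ {x})) := by
        intro y hyT
        have hyS : y ∈ S := hTS hyT
        rcases htri x hxS y hyS with hxy | hxy | hxy
        · have hpW : (x, y) ∈ W := ⟨hxS, hyS, hxy⟩
          by_cases hpM : (x, y) ∈ M
          · exact Or.inr (Or.inl hpM)
          · exact Or.inl ⟨hWB hpW, hTH hxT, hTH hyT⟩
        · exact Or.inr (Or.inr (Or.inr hxy.symm))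
        · exact Or.inr (Or.inr (Or.inl ⟨hyS, hxy⟩))
      have : c ≤ f x + ((volume (Prod.mk x ⁻¹' M)) +
          (volume {z | z ∈ S ∧ r z x} + volume {x})) := by
        calc c = volume T := rfl
          _ ≤ volume ((Prod.mk x ⁻¹' B') ∪ ((Prod.mk x ⁻¹' M) ∪
                ({z | z ∈ S ∧ r z x} ∪ {x}))) := measure_mono hcover
          _ ≤ f x + ((volume (Prod.mk x ⁻¹' M)) +
                (volume {z | z ∈ S ∧ r z x} + volume {x})) := by
              refine le_trans (measure_union_le _ _) ?_
              gcongr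
              refine le_trans (measure_union_le _ _) ?_
              gcongr
              exact measure_union_le _ _
        
      show c ≤ f x
      simpa [hxM, hTsec x hxT, Real.volume_singleton] using this
    have hTA' : c ≤ volume (T ∩ A') := by
      calc c = volume (T \ {x | volume (Prod.mk x ⁻¹' M) ≠ 0}) :=
            (measure_diff_null (ae_iff.mp hae1)).symm
        _ ≤ volume (T ∩ A') :=
            measure_mono (fun x hx => ⟨hx.1, hTgood hx⟩)
    have hHA' : c ≤ volume (H ∩ A') := (hull hA'm).symm ▸ hTA'
    rw [Measure.volume_eq_prod, Measure.prod_apply hB'm]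
    calc c * c ≤ c * volume (H ∩ A') := by gcongr
      _ = ∫⁻ _ in H ∩ A', c := (setLIntegral_const _ _).symm
      _ ≤ ∫⁻ x in H ∩ A', f x := by
          refine setLIntegral_mono hfm ?_
          intro x hx
          exact hx.2
      _ ≤ ∫⁻ x, f x := setLIntegral_le_lintegral _ _
  rw [upper] at lower
  exact mul_ne_zero hn hn (le_antisymm lower zero_le)
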